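/- Let 0 < d ≤ n. For every constant C > 0 there exist C' > 0 and n₀ (depending only on C) such that for all n ≥ n₀, with probability at least 1 − n^{−C} over A drawn from G(n, d/n), the number of indices i ∈ [n] whose degree d_i = ∑_j A_{ij} exceeds 2(1−1/n)d is at most C'·n/d. -/

import Mathlib

open MeasureTheory Finset

namespace ER

abbrev Edge (n : ℕ) := {q : Fin n × Fin n // q.1 < q.2}

/-- The Erdős–Rényi measure `G(n, d/n)`: i.i.d. Bernoulli(d/n) indicators on pairs i < j. -/
noncomputable def erMeasure (n : ℕ) (d : ℝ) : Measure (Edge n → Bool) :=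
  Measure.pi fun _ => (PMF.bernoulli (min (Real.toNNReal (d / n)) 1) (min_le_right _ _)).toMeasure

/-- Adjacency matrix entry of the graph encoded by `ω`. -/
noncomputable def adj {n : ℕ} (ω : Edge n → Bool) (i j : Fin n) : ℝ :=
  if h : i < j then (if ω ⟨(i, j), h⟩ then 1 else 0)
  else if h' : j < i then (if ω ⟨(j, i), h'⟩ then 1 else 0)
  else 0

/-- Average degree `d(A) = (1/n) ∑_{i,j} A_{ij}`. -/
noncomputable def avgDeg {n : ℕ} (ω : Edge n → Bool) : ℝ :=
  (1 / n) * ∑ i, ∑ j, adj ω i j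

/-- Degree of vertex `i`. -/
noncomputable def deg {n : ℕ} (ω : Edge n → Bool) (i : Fin n) : ℝ :=
  ∑ j, adj ω i j

/-- Number of edges inside `S`. -/
noncomputable def eIn {n : ℕ} (ω : Edge n → Bool) (S : Finset (Fin n)) : ℝ :=
  ∑ i ∈ S, ∑ j ∈ S, if i < j then adj ω i j else 0

/-- Number of edges between `S` and its complement. -/
noncomputable def eCut {n : ℕ} (ω : Edge n → Bool) (S : Finset (Fin n)) : ℝ :=
  ∑ i ∈ S, ∑ j ∈ Sᶜ, adj ω i j

open scoped ENNReal

instance mscPiBool {ι : Type*} [Countable ι] : MeasurableSingletonClass (ι → Bool) := by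
  constructor
  intro f
  have h : ({f} : Set (ι → Bool)) = ⋂ i, (fun ω => ω i) ⁻¹' {f i} := by
    ext g; simp [funext_iff]
  rw [h]
  exact MeasurableSet.iInter fun i => measurable_pi_apply i (measurableSet_singleton _)

lemma measure_finset_sum {α : Type*} [MeasurableSpace α] [MeasurableSingletonClass α]
    (μ : Measure α) (s : Finset α) : μ ↑s = ∑ x ∈ s, μ {x} := by
  rw [← Set.biUnion_of_singleton (↑s : Set α)]
  exact measure_biUnion_finset (by simp [Set.PairwiseDisjoint, Set.Pairwise, Function.onFun])
    (fun b _ => measurableSet_singleton b)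

lemma chernoff_bound {ι : Type*} [Fintype ι] (r : NNReal) (hr : r ≤ 1) (p : ℝ)
    (hp0 : 0 ≤ p) (hp1 : p ≤ 1) (hrp : (r : ℝ≥0∞) = ENNReal.ofReal p) (c : ι → ℕ) (t : ℕ) :
    Measure.pi (fun _ : ι => (PMF.bernoulli r hr).toMeasure)
      {ω : ι → Bool | t ≤ ∑ e, c e * (if ω e then 1 else 0)}
      ≤ ENNReal.ofReal (Real.exp (∑ e, p * (2 ^ (c e) - 1)) / 2 ^ t) := by
  classical
  set μ := Measure.pi (fun _ : ι => (PMF.bernoulli r hr).toMeasure) with hμ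
  set w : Bool → ℝ≥0∞ := fun b => if b then (r : ℝ≥0∞) else 1 - (r : ℝ≥0∞) with hw
  have hsing : ∀ ω : ι → Bool, μ {ω} = ∏ e, w (ω e) := by
    intro ω
    have h1 : ({ω} : Set (ι → Bool)) = Set.pi Set.univ (fun e => {ω e}) := by
      ext g; simp [funext_iff, Set.mem_pi]
    rw [hμ, h1, Measure.pi_pi]
    refine Finset.prod_congr rfl fun e _ => ?_
    rw [PMF.toMeasure_apply_singleton _ _ (measurableSet_singleton _)]
    cases h : ω e <;> simp [PMF.bernoulli, hw]
  -- the event as a finset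
  set S : Finset (ι → Bool) := Finset.univ.filter
      (fun ω => t ≤ ∑ e, c e * (if ω e then 1 else 0)) with hS
  have hset : {ω : ι → Bool | t ≤ ∑ e, c e * (if ω e then 1 else 0)} = ↑S := by
    ext ω; simp [hS]
  rw [hset, measure_finset_sum]
  -- MGF
  have hmgf : ∑ ω : ι → Bool, ∏ e, (w (ω e) * 2 ^ (c e * (if ω e then 1 else 0)))
      = ∏ e, ((1 - (r : ℝ≥0∞)) + (r : ℝ≥0∞) * 2 ^ (c e)) := by
    have := Finset.prod_univ_sum (fun _ : ι => (Finset.univ : Finset Bool))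
      (fun e b => w b * 2 ^ (c e * (if b then 1 else 0)))
    rw [Fintype.piFinset_univ] at this
    rw [← this]
    refine Finset.prod_congr rfl fun e _ => ?_
    simp [hw, Fintype.sum_bool, add_comm]
  -- Markov step
  have hmain : (∑ x ∈ S, μ {x}) * 2 ^ t ≤ ∏ e, ((1 - (r : ℝ≥0∞)) + (r : ℝ≥0∞) * 2 ^ (c e)) := by
    rw [← hmgf, Finset.sum_mul]
    calc ∑ x ∈ S, μ {x} * 2 ^ t
        ≤ ∑ x ∈ S, ∏ e, (w (x e) * 2 ^ (c e * (if x e then 1 else 0))) := by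
          refine Finset.sum_le_sum fun x hx => ?_
          rw [Finset.prod_mul_distrib, ← hsing x, Finset.prod_pow_eq_pow_sum]
          exact mul_le_mul_right (pow_le_pow_right' one_le_two (by
            simpa [hS] using hx)) _
      _ ≤ ∑ x : ι → Bool, ∏ e, (w (x e) * 2 ^ (c e * (if x e then 1 else 0))) :=
          Finset.sum_le_sum_of_subset (Finset.subset_univ S)
  -- factor bound
  have hfac : ∏ e, ((1 - (r : ℝ≥0∞)) + (r : ℝ≥0∞) * 2 ^ (c e))
      ≤ ENNReal.ofReal (Real.exp (∑ e, p * (2 ^ (c e) - 1))) := by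
    rw [Real.exp_sum, ENNReal.ofReal_prod_of_nonneg (fun i _ => (Real.exp_pos _).le)]
    refine Finset.prod_le_prod' fun e _ => ?_
    have h2 : ((2 : ℝ≥0∞) ^ (c e)) = ENNReal.ofReal ((2 : ℝ) ^ (c e)) := by
      rw [ENNReal.ofReal_pow (by norm_num), ENNReal.ofReal_ofNat]
    have h3 : (1 : ℝ≥0∞) - r = ENNReal.ofReal (1 - p) := by
      rw [hrp, ← ENNReal.ofReal_one, ← ENNReal.ofReal_sub _ hp0]
    rw [h3, hrp, h2, ← ENNReal.ofReal_mul hp0, ← ENNReal.ofReal_add (by linarith) (by positivity)]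
    apply ENNReal.ofReal_le_ofReal
    have h4 : (1 : ℝ) ≤ 2 ^ (c e) := one_le_pow₀ one_le_two
    calc 1 - p + p * 2 ^ (c e) = p * (2 ^ (c e) - 1) + 1 := by ring
      _ ≤ Real.exp (p * (2 ^ (c e) - 1)) := Real.add_one_le_exp _
  -- combine
  have h2t : ((2 : ℝ≥0∞) ^ t) ≠ 0 := by positivity
  have h2t' : ((2 : ℝ≥0∞) ^ t) ≠ ⊤ := by
    exact ENNReal.pow_ne_top (by norm_num)
  rw [ENNReal.ofReal_div_of_pos (by positivity)]
  rw [ENNReal.le_div_iff_mul_le (Or.inl (by positivity)) (Or.inl (by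
    exact ENNReal.ofReal_ne_top))]
  calc (∑ x ∈ S, μ {x}) * ENNReal.ofReal ((2:ℝ) ^ t)
      = (∑ x ∈ S, μ {x}) * 2 ^ t := by
        rw [ENNReal.ofReal_pow (by norm_num), ENNReal.ofReal_ofNat]
    _ ≤ _ := hmain.trans hfac


lemma edge_double_sum {M : Type*} [AddCommMonoid M] {n : ℕ} (G : Edge n → M) :
    ∑ e : Edge n, G e = ∑ a : Fin n, ∑ b : Fin n, (if h : a < b then G ⟨(a,b), h⟩ else 0) := by
  classical
  have h1 : ∑ a : Fin n, ∑ b : Fin n, (if h : a < b then G ⟨(a,b), h⟩ else 0)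
      = ∑ q ∈ (Finset.univ.filter (fun q : Fin n × Fin n => q.1 < q.2)),
          (if h : q.1 < q.2 then G ⟨(q.1, q.2), h⟩ else 0) := by
    rw [Finset.sum_filter, Fintype.sum_prod_type]
    refine Finset.sum_congr rfl fun a _ => Finset.sum_congr rfl fun b _ => ?_
    by_cases h : a < b <;> simp [h]
  rw [h1, Finset.sum_subtype (Finset.univ.filter (fun q : Fin n × Fin n => q.1 < q.2))
    (p := fun q : Fin n × Fin n => q.1 < q.2) (by intro x; simp)
    (f := fun q => if h : q.1 < q.2 then G ⟨(q.1, q.2), h⟩ else 0)]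
  refine Finset.sum_congr rfl fun e _ => ?_
  rw [dif_pos e.2]

lemma adj_comm {n : ℕ} (ω : Edge n → Bool) (a b : Fin n) : adj ω a b = adj ω b a := by
  unfold adj
  rcases lt_trichotomy a b with h | h | h
  · rw [dif_pos h, dif_neg (asymm h), dif_pos h]
  · subst h; rw [dif_neg (lt_irrefl a)]
  · rw [dif_neg (asymm h), dif_pos h, dif_pos h]

lemma adj_self {n : ℕ} (ω : Edge n → Bool) (a : Fin n) : adj ω a a = 0 := by
  unfold adj; rw [dif_neg (lt_irrefl a), dif_neg (lt_irrefl a)]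

variable {n : ℕ} (T : Finset (Fin n))

/-- endpoint count of an edge w.r.t. `T` -/
def cT (e : Edge n) : ℕ :=
  (if e.1.1 ∈ T then 1 else 0) + (if e.1.2 ∈ T then 1 else 0)

lemma cT_le_two (e : Edge n) : cT T e ≤ 2 := by
  unfold cT; split <;> split <;> norm_num

lemma card_lt_add_gt (i : Fin n) :
    (Finset.univ.filter (fun j => i < j)).card + (Finset.univ.filter (fun j => j < i)).card
      = n - 1 := by
  classical
  have hdisj : Disjoint (Finset.univ.filter (fun j => i < j))
      (Finset.univ.filter (fun j => j < i)) := by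
    rw [Finset.disjoint_left]
    intro j h1 h2
    simp only [Finset.mem_filter] at h1 h2
    exact absurd (h1.2.trans h2.2) (lt_irrefl i)
  have hunion : Finset.univ.filter (fun j => i < j) ∪ Finset.univ.filter (fun j => j < i)
      = Finset.univ.erase i := by
    ext j
    simp only [Finset.mem_union, Finset.mem_filter, Finset.mem_erase, Finset.mem_univ,
      true_and, and_true]
    rw [← ne_iff_lt_or_gt, ne_comm]
  rw [← Finset.card_union_of_disjoint hdisj, hunion,
    Finset.card_erase_of_mem (Finset.mem_univ i), Finset.card_univ, Fintype.card_fin]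

/-- indicator -/
noncomputable def chi (T : Finset (Fin n)) (a : Fin n) : ℝ := if a ∈ T then 1 else 0

lemma chi_nonneg (a : Fin n) : 0 ≤ chi T a := by unfold chi; split <;> norm_num

lemma sum_chi : ∑ a, chi T a = T.card := by
  unfold chi; rw [Finset.sum_boole]; congr 1; simp [Finset.filter_mem_eq_inter]

lemma cT_cast (e : Edge n) : ((cT T e : ℕ) : ℝ) = chi T e.1.1 + chi T e.1.2 := by
  unfold cT chi; push_cast; split <;> split <;> norm_num

-- (A)
lemma sum_cT : ∑ e : Edge n, ((cT T e : ℕ) : ℝ) = T.card * (n - 1 : ℕ) := by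
  classical
  rw [edge_double_sum (fun e => ((cT T e : ℕ) : ℝ))]
  have h1 : ∀ a b : Fin n, (if h : a < b then ((cT T ⟨(a,b),h⟩ : ℕ) : ℝ) else 0)
      = (if a < b then chi T a else 0) + (if a < b then chi T b else 0) := by
    intro a b
    by_cases h : a < b
    · rw [dif_pos h, if_pos h, if_pos h, cT_cast]
    · rw [dif_neg h, if_neg h, if_neg h]; ring
  simp only [h1, Finset.sum_add_distrib]
  have h2 : ∑ a : Fin n, ∑ b : Fin n, (if a < b then chi T a else 0)
      = ∑ a : Fin n, chi T a * ((Finset.univ.filter (fun j => a < j)).card : ℝ) := by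
    refine Finset.sum_congr rfl fun a _ => ?_
    rw [← Finset.sum_filter, Finset.sum_const, nsmul_eq_mul, mul_comm]
  have h3 : ∑ a : Fin n, ∑ b : Fin n, (if a < b then chi T b else 0)
      = ∑ b : Fin n, chi T b * ((Finset.univ.filter (fun j => j < b)).card : ℝ) := by
    rw [Finset.sum_comm]
    refine Finset.sum_congr rfl fun b _ => ?_
    rw [← Finset.sum_filter, Finset.sum_const, nsmul_eq_mul, mul_comm]
  rw [h2, h3, ← Finset.sum_add_distrib]
  have h4 : ∀ i : Fin n, chi T i * ((Finset.univ.filter (fun j => i < j)).card : ℝ)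
      + chi T i * ((Finset.univ.filter (fun j => j < i)).card : ℝ)
      = chi T i * ((n - 1 : ℕ) : ℝ) := by
    intro i
    rw [← mul_add, ← Nat.cast_add, card_lt_add_gt]
  simp only [h4]
  rw [← Finset.sum_mul, sum_chi]

-- (B)
lemma sum_cT_sq : ∑ e : Edge n, ((cT T e : ℕ) : ℝ) * (((cT T e : ℕ) : ℝ) - 1)
    = T.card * (T.card - 1) := by
  classical
  have key : ∀ e : Edge n, ((cT T e : ℕ) : ℝ) * (((cT T e : ℕ) : ℝ) - 1)
      = 2 * (chi T e.1.1 * chi T e.1.2) := by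
    intro e
    rw [cT_cast]; unfold chi; split <;> split <;> norm_num
  simp only [key]
  rw [← Finset.mul_sum]
  rw [edge_double_sum (fun e : Edge n => chi T e.1.1 * chi T e.1.2)]
  have hI : ∀ a b : Fin n, (if h : a < b then chi T a * chi T b else 0)
      = (if a < b then chi T a * chi T b else 0) := fun a b => by
    by_cases h : a < b <;> simp [h]
  simp only [hI]
  have swap : ∑ a : Fin n, ∑ b : Fin n, (if a < b then chi T a * chi T b else 0)
      = ∑ a : Fin n, ∑ b : Fin n, (if b < a then chi T a * chi T b else 0) := by
    rw [Finset.sum_comm]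
    refine Finset.sum_congr rfl fun a _ => Finset.sum_congr rfl fun b _ => ?_
    rw [mul_comm]
  have hdouble : 2 * ∑ a : Fin n, ∑ b : Fin n, (if a < b then chi T a * chi T b else 0)
      = ∑ a : Fin n, ∑ b : Fin n, ((if a < b then chi T a * chi T b else 0)
          + (if b < a then chi T a * chi T b else 0)) := by
    rw [two_mul]
    nth_rewrite 2 [swap]
    rw [← Finset.sum_add_distrib]
    exact Finset.sum_congr rfl fun a _ => (Finset.sum_add_distrib).symm
  rw [hdouble]
  have h5 : ∀ a b : Fin n, ((if a < b then chi T a * chi T b else 0)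
      + (if b < a then chi T a * chi T b else 0))
      = chi T a * chi T b - (if a = b then chi T a * chi T b else 0) := by
    intro a b
    rcases lt_trichotomy a b with h | h | h
    · rw [if_pos h, if_neg (asymm h), if_neg h.ne]; ring
    · subst h; rw [if_neg (lt_irrefl a), if_pos rfl]; ring
    · rw [if_neg (asymm h), if_pos h, if_neg h.ne']; ring
  simp only [h5]
  simp only [Finset.sum_sub_distrib]
  have e1 : ∑ a : Fin n, ∑ b : Fin n, chi T a * chi T b = (T.card : ℝ) * T.card := by
    simp only [← Finset.mul_sum]
    rw [sum_chi, ← Finset.sum_mul, sum_chi]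
  have e2 : ∑ a : Fin n, ∑ b : Fin n, (if a = b then chi T a * chi T b else 0)
      = (T.card : ℝ) := by
    have h6 : ∀ a : Fin n, ∑ b : Fin n, (if a = b then chi T a * chi T b else 0)
        = chi T a := by
      intro a
      rw [Finset.sum_ite_eq]
      simp only [Finset.mem_univ, if_true]
      unfold chi; split <;> norm_num
    simp only [h6]; rw [sum_chi]
  rw [e1, e2]; ring

-- (C) the weighted count equals the degree sum over T
lemma W_eq_degsum (ω : Edge n → Bool) :
    ((∑ e : Edge n, cT T e * (if ω e then 1 else 0) : ℕ) : ℝ) = ∑ i ∈ T, deg ω i := by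
  classical
  push_cast
  have hx : ∀ e : Edge n, ((cT T e : ℕ) : ℝ) * (if ω e then (1:ℝ) else 0)
      = (chi T e.1.1 + chi T e.1.2) * (if ω e then (1:ℝ) else 0) := by
    intro e; rw [cT_cast]
  rw [show (∑ e : Edge n, (((cT T e : ℕ) : ℝ) * if ω e then (1:ℝ) else 0))
      = ∑ e : Edge n, (chi T e.1.1 + chi T e.1.2) * (if ω e then (1:ℝ) else 0) from
      Finset.sum_congr rfl fun e _ => hx e]
  rw [edge_double_sum (fun e : Edge n => (chi T e.1.1 + chi T e.1.2) * (if ω e then (1:ℝ) else 0))]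
  have key : ∀ a b : Fin n, (if h : a < b then
        (chi T a + chi T b) * (if ω ⟨(a,b),h⟩ then (1:ℝ) else 0) else 0)
      = (if a < b then chi T a * adj ω a b else 0) + (if a < b then chi T b * adj ω a b else 0) := by
    intro a b
    by_cases h : a < b
    · rw [dif_pos h, if_pos h, if_pos h]
      have hadj : adj ω a b = (if ω ⟨(a,b),h⟩ then (1:ℝ) else 0) := by
        unfold adj; rw [dif_pos h]
      rw [hadj]; ring
    · rw [dif_neg h, if_neg h, if_neg h]; ring
  simp only [key]
  simp only [Finset.sum_add_distrib]
  have hB : (∑ a : Fin n, ∑ b : Fin n, (if a < b then chi T b * adj ω a b else 0))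
      = ∑ a : Fin n, ∑ b : Fin n, (if b < a then chi T a * adj ω a b else 0) := by
    rw [Finset.sum_comm]
    refine Finset.sum_congr rfl fun a _ => Finset.sum_congr rfl fun b _ => ?_
    by_cases h : b < a
    · rw [if_pos h, if_pos h, adj_comm]
    · rw [if_neg h, if_neg h]
  rw [hB, ← Finset.sum_add_distrib]
  have hAB : ∀ a : Fin n, (∑ b : Fin n, (if a < b then chi T a * adj ω a b else 0))
      + (∑ b : Fin n, (if b < a then chi T a * adj ω a b else 0))
      = chi T a * deg ω a := by
    intro a
    rw [← Finset.sum_add_distrib]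
    unfold deg
    rw [Finset.mul_sum]
    refine Finset.sum_congr rfl fun b _ => ?_
    rcases lt_trichotomy a b with h | h | h
    · rw [if_pos h, if_neg (asymm h)]; ring
    · subst h; rw [if_neg (lt_irrefl a), adj_self]; ring
    · rw [if_neg (asymm h), if_pos h]; ring
  have hAB' : (∑ a : Fin n, ((∑ b : Fin n, (if a < b then chi T a * adj ω a b else 0))
      + (∑ b : Fin n, (if b < a then chi T a * adj ω a b else 0))))
      = ∑ a : Fin n, chi T a * deg ω a := Finset.sum_congr rfl fun a _ => hAB a
  rw [hAB']
  have hfin : ∀ a : Fin n, chi T a * deg ω a = (if a ∈ T then deg ω a else 0) := by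
    intro a; unfold chi; split <;> simp
  simp only [hfin]
  rw [Finset.sum_ite_mem, Finset.univ_inter]


set_option maxHeartbeats 1000000 in

lemma numeric_bound (C : ℝ) (hC : 0 < C) (n : ℕ) (hn30 : 30 ≤ n)
    (hnC : ((Nat.ceil C + 1)^2 : ℕ) ≤ n)
    (d : ℝ) (hd : 100 < d) (hdn : d ≤ n) (m t : ℕ)
    (hm1 : (m:ℝ) - 1 ≤ (n:ℝ)/2)
    (hm2 : 50 * (n:ℝ) ≤ d * m)
    (ht : 2 * (1 - 1/(n:ℝ)) * d * m ≤ (t:ℝ)) :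
    2^n * (Real.exp ((d/(n:ℝ)) * ((m:ℝ)*((n:ℝ)-1) + (m:ℝ)*((m:ℝ)-1)/2)) / 2^t)
      ≤ (n:ℝ)^(-C) := by
  have hn0 : (0:ℝ) < n := by positivity
  have hn30' : (30:ℝ) ≤ n := by exact_mod_cast hn30
  set L := Real.log 2 with hL
  have hL1 : 0.6931 < L := lt_of_lt_of_le (by norm_num) Real.log_two_gt_d9.le
  have hL2 : L < 0.6932 := lt_of_le_of_lt Real.log_two_lt_d9.le (by norm_num)
  set b := (d/(n:ℝ)) * m * ((n:ℝ) - 1) with hb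
  have hm0 : (0:ℝ) ≤ m := Nat.cast_nonneg m
  have hbn : 48 * (n:ℝ) ≤ b := by
    have h1 : (29:ℝ)/30 ≤ ((n:ℝ)-1)/n := by
      rw [le_div_iff₀ hn0]; linarith
    have h2 : b = (d * m) * (((n:ℝ)-1)/n) := by rw [hb]; ring
    rw [h2]
    have : 50 * (n:ℝ) * (29/30) ≤ (d*m) * (((n:ℝ)-1)/n) := by
      apply mul_le_mul hm2 h1 (by norm_num) (by positivity)
    linarith
  have hb0 : (0:ℝ) ≤ b := by linarith
  have hS : (d/(n:ℝ)) * ((m:ℝ)*((n:ℝ)-1) + (m:ℝ)*((m:ℝ)-1)/2) ≤ b + 0.26 * b := by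
    have hpm : (0:ℝ) ≤ (d/(n:ℝ)) * m := by positivity
    have h1 : (m:ℝ) - 1 ≤ 0.52 * ((n:ℝ) - 1) := by linarith
    have h2 : (d/(n:ℝ)) * m * ((m:ℝ)-1) ≤ (d/(n:ℝ)) * m * (0.52 * ((n:ℝ)-1)) :=
      mul_le_mul_of_nonneg_left h1 hpm
    have h3 : (d/(n:ℝ)) * m * (0.52 * ((n:ℝ)-1)) = 0.52 * b := by rw [hb]; ring
    have h4 : (d/(n:ℝ)) * ((m:ℝ)*((n:ℝ)-1) + (m:ℝ)*((m:ℝ)-1)/2)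
        = b + ((d/(n:ℝ)) * m * ((m:ℝ)-1))/2 := by rw [hb]; ring
    linarith
  have hθ : 2 * (1 - 1/(n:ℝ)) * d * m = 2 * b := by
    rw [hb]; field_simp
  -- rewrite powers as exponentials
  have h2n : (2:ℝ)^n = Real.exp ((n:ℝ) * L) := by
    rw [hL, ← Real.log_pow, Real.exp_log (by positivity)]
  have h2t : (2:ℝ)^t = Real.exp ((t:ℝ) * L) := by
    rw [hL, ← Real.log_pow, Real.exp_log (by positivity)]
  rw [h2n, h2t, ← Real.exp_sub, ← Real.exp_add]
  have hrpow : (n:ℝ)^(-C) = Real.exp (Real.log n * (-C)) := by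
    rw [Real.rpow_def_of_pos hn0]
  rw [hrpow]
  apply Real.exp_le_exp.mpr
  -- main exponent inequality
  have htL : 2 * b * L ≤ (t:ℝ) * L := by
    apply mul_le_mul_of_nonneg_right _ (by linarith)
    rw [← hθ]; exact ht
  have hnL : (n:ℝ) * L ≤ 0.6932 * n := by nlinarith
  have hbL : 1.3862 * b ≤ 2 * b * L := by nlinarith
  have hmain : (n:ℝ) * L + (d/(n:ℝ)) * ((m:ℝ)*((n:ℝ)-1) + (m:ℝ)*((m:ℝ)-1)/2) - (t:ℝ) * L
      ≤ -2 * n := by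
    linarith [hnL, hS, htL, hbL, hbn]
  -- C log n ≤ 2 n
  have hsq : (0:ℝ) ≤ Real.sqrt n := Real.sqrt_nonneg _
  have hCs : C ≤ Real.sqrt n := by
    have h1 : ((Nat.ceil C + 1 : ℕ) : ℝ)^2 ≤ (n:ℝ) := by
      exact_mod_cast hnC
    have h2 : ((Nat.ceil C + 1 : ℕ) : ℝ) ≤ Real.sqrt n := by
      rw [show ((Nat.ceil C + 1 : ℕ) : ℝ) = Real.sqrt (((Nat.ceil C + 1 : ℕ) : ℝ)^2) by
        rw [Real.sqrt_sq (by positivity)]]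
      exact Real.sqrt_le_sqrt h1
    have h3 : C ≤ ((Nat.ceil C + 1 : ℕ) : ℝ) := by
      push_cast; linarith [Nat.le_ceil C]
    linarith
  have hlogn : Real.log n ≤ 2 * Real.sqrt n := by
    have h1 : Real.log (Real.sqrt n) = Real.log n / 2 := Real.log_sqrt hn0.le
    have h2 : Real.log (Real.sqrt n) ≤ Real.sqrt n - 1 :=
      Real.log_le_sub_one_of_pos (Real.sqrt_pos.mpr hn0)
    linarith
  have hlog0 : 0 ≤ Real.log n := Real.log_nonneg (by linarith)
  have hfin : C * Real.log n ≤ 2 * n := by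
    have := mul_le_mul hCs hlogn hlog0 hsq
    have hss : Real.sqrt n * (2 * Real.sqrt n) = 2 * n := by
      rw [show Real.sqrt (n:ℝ) * (2 * Real.sqrt n) = 2 * (Real.sqrt n * Real.sqrt n) by ring,
        Real.mul_self_sqrt hn0.le]
    linarith [this, hss.le]
  linarith [hmain, hfin]


lemma choose_le_two_pow' (n m : ℕ) : n.choose m ≤ 2^n := by
  rcases le_or_gt m n with h | h
  · calc n.choose m ≤ ∑ i ∈ Finset.range (n+1), n.choose i :=
        Finset.single_le_sum (fun i _ => Nat.zero_le _) (Finset.mem_range.mpr (Nat.lt_succ_of_le h))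
    _ = 2^n := Nat.sum_range_choose n
  · rw [Nat.choose_eq_zero_of_lt h]; exact Nat.zero_le _

attribute [local instance] Classical.propDecidable

set_option maxHeartbeats 2000000 in
/-- Lemma C.5 (number of high-degree vertices). -/
theorem high_degree_vertices :
    ∀ C : ℝ, 0 < C →
    ∃ (C' : ℝ) (n₀ : ℕ), 0 < C' ∧
      ∀ n : ℕ, n₀ ≤ n →
      ∀ d : ℝ, 0 < d → d ≤ n →
        erMeasure n d
            {ω | ((Finset.univ.filter fun i : Fin n =>
                2 * (1 - 1 / n) * d < deg ω i).card : ℝ) ≤ C' * n / d} ≥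
          ENNReal.ofReal (1 - (n : ℝ) ^ (-C)) := by
  intro C hC
  refine ⟨100, max 30 ((Nat.ceil C + 1)^2), by norm_num, ?_⟩
  intro n hn d hd0 hdn
  have hn30 : 30 ≤ n := le_trans (le_max_left _ _) hn
  have hnC : ((Nat.ceil C + 1)^2 : ℕ) ≤ n := le_trans (le_max_right _ _) hn
  have hn0 : 0 < n := by omega
  have hn0' : (0:ℝ) < n := by exact_mod_cast hn0
  haveI : IsProbabilityMeasure (erMeasure n d) := by
    unfold erMeasure; infer_instance
  have hrpow0 : (0:ℝ) ≤ (n:ℝ)^(-C) := Real.rpow_nonneg (by positivity) _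
  by_cases hd100 : d ≤ 100
  · -- trivial case: the event is everything
    have hEv : {ω : Edge n → Bool | ((Finset.univ.filter fun i : Fin n =>
        2 * (1 - 1 / n) * d < deg ω i).card : ℝ) ≤ 100 * n / d} = Set.univ := by
      apply Set.eq_univ_iff_forall.mpr
      intro ω
      have h1 : (Finset.univ.filter fun i : Fin n =>
          2 * (1 - 1 / n) * d < deg ω i).card ≤ n := by
        calc _ ≤ (Finset.univ : Finset (Fin n)).card := Finset.card_filter_le _ _
        _ = n := by simp
      have h2 : ((Finset.univ.filter fun i : Fin n =>
          2 * (1 - 1 / n) * d < deg ω i).card : ℝ) ≤ (n : ℝ) := by exact_mod_cast h1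
      have h3 : (n:ℝ) ≤ 100 * n / d := by
        rw [le_div_iff₀ hd0]; nlinarith
      exact le_trans h2 h3
    rw [hEv, measure_univ]
    exact ENNReal.ofReal_le_one.mpr (by linarith)
  · push_neg at hd100
    set p : ℝ := d / n with hp
    have hp0 : 0 ≤ p := by positivity
    have hp1 : p ≤ 1 := by rw [hp, div_le_one hn0']; exact hdn
    set a : ℕ := Nat.floor (100 * (n:ℝ) / d) + 1 with ha
    set m : ℕ := min a (n/2 + 1) with hm
    set θ : ℝ := 2 * (1 - 1/(n:ℝ)) * d * m with hθdef
    have hinv : 1/(n:ℝ) ≤ 1 := by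
      rw [div_le_one hn0']; exact_mod_cast hn0
    have hθ0 : 0 ≤ θ := by
      rw [hθdef]
      have : (0:ℝ) ≤ 1 - 1/(n:ℝ) := by linarith
      positivity
    set t : ℕ := Nat.ceil θ with htdef
    -- m facts
    have hm1 : (m:ℝ) - 1 ≤ (n:ℝ)/2 := by
      have h1 : m ≤ n/2 + 1 := min_le_right _ _
      have h2 : (m:ℝ) ≤ ((n/2 : ℕ) : ℝ) + 1 := by exact_mod_cast h1
      have h3 : ((n/2 : ℕ) : ℝ) ≤ (n:ℝ)/2 := Nat.cast_div_le
      linarith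
    have hm2 : 50 * (n:ℝ) ≤ d * m := by
      rcases min_cases a (n/2 + 1) with ⟨hmin, _⟩ | ⟨hmin, _⟩
      · -- m = a
        have h1 : 100 * (n:ℝ) / d < a := by
          rw [ha]; push_cast
          exact Nat.lt_floor_add_one _
        have h2 : 100 * (n:ℝ) < d * a := by
          rw [div_lt_iff₀ hd0] at h1; linarith
        rw [hm, hmin]; nlinarith
      · -- m = n/2 + 1
        have h1 : n ≤ 2 * (n/2) + 1 := by omega
        have h2 : (n:ℝ) ≤ 2 * ((n/2 + 1 : ℕ) : ℝ) := by
          have : (n:ℝ) ≤ ((2 * (n/2) + 2 : ℕ) : ℝ) := by exact_mod_cast Nat.le_succ_of_le h1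
          push_cast at this ⊢; linarith
        rw [hm, hmin]
        set mm := ((n/2 + 1 : ℕ) : ℝ)
        have hmm0 : 0 ≤ mm := Nat.cast_nonneg _
        nlinarith
    have hm2' : 0 < m := by
      by_contra h
      push_neg at h
      interval_cases m
      simp at hm2
      nlinarith
    -- the per-T bound
    set B : ℝ := Real.exp (p * ((m:ℝ)*((n:ℝ)-1) + (m:ℝ)*((m:ℝ)-1)/2)) / 2^t with hB
    have hB0 : 0 ≤ B := by positivity
    have perT : ∀ T ∈ Finset.powersetCard m (Finset.univ : Finset (Fin n)),
        erMeasure n d {ω : Edge n → Bool | ∀ i ∈ T, 2 * (1 - 1/(n:ℝ)) * d < deg ω i}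
          ≤ ENNReal.ofReal B := by
      intro T hT
      have hTcard : T.card = m := (Finset.mem_powersetCard_univ).mp hT
      have hsub : {ω : Edge n → Bool | ∀ i ∈ T, 2 * (1 - 1/(n:ℝ)) * d < deg ω i}
          ⊆ {ω : Edge n → Bool | t ≤ ∑ e : Edge n, cT T e * (if ω e then 1 else 0)} := by
        intro ω hω
        simp only [Set.mem_setOf_eq] at hω ⊢
        rw [htdef]
        apply Nat.ceil_le.mpr
        rw [W_eq_degsum]
        calc θ = ∑ _i ∈ T, 2 * (1 - 1/(n:ℝ)) * d := by
              rw [Finset.sum_const, hTcard, nsmul_eq_mul, hθdef]; ring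
          _ ≤ ∑ i ∈ T, deg ω i := Finset.sum_le_sum fun i hi => (hω i hi).le
      refine le_trans (measure_mono hsub) ?_
      have hrp : ((min (Real.toNNReal (d / (n:ℝ))) 1 : NNReal) : ℝ≥0∞) = ENNReal.ofReal p := by
        rw [hp, min_eq_left (by simpa using Real.toNNReal_le_toNNReal hp1)]; rfl
      have hchern := chernoff_bound (min (Real.toNNReal (d / (n:ℝ))) 1)
        (min_le_right _ _) p hp0 hp1 hrp (cT T) t
      have hMeq : erMeasure n d = Measure.pi
          (fun _ : Edge n => (PMF.bernoulli (min (Real.toNNReal (d / (n:ℝ))) 1)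
            (min_le_right _ _)).toMeasure) := rfl
      rw [hMeq]
      refine le_trans hchern (ENNReal.ofReal_le_ofReal ?_)
      have hsum : ∑ e : Edge n, p * ((2:ℝ)^(cT T e) - 1)
          = p * ((m:ℝ)*((n:ℝ)-1) + (m:ℝ)*((m:ℝ)-1)/2) := by
        rw [← Finset.mul_sum]
        congr 1
        have hpt : ∀ e : Edge n, ((2:ℝ)^(cT T e) - 1)
            = ((cT T e : ℕ):ℝ) + ((cT T e : ℕ):ℝ)*(((cT T e:ℕ):ℝ) - 1)/2 := by
          intro e
          have h := cT_le_two T e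
          set k := cT T e with hk
          interval_cases k <;> norm_num
        rw [Finset.sum_congr rfl (fun e _ => hpt e), Finset.sum_add_distrib, sum_cT]
        rw [show (∑ e : Edge n, ((cT T e:ℕ):ℝ)*(((cT T e:ℕ):ℝ)-1)/2)
            = (∑ e : Edge n, ((cT T e:ℕ):ℝ)*(((cT T e:ℕ):ℝ)-1))/2 from (Finset.sum_div _ _ _).symm]
        rw [sum_cT_sq, hTcard]
        have hcast : ((n - 1 : ℕ) : ℝ) = (n:ℝ) - 1 := by
          rw [Nat.cast_sub (by omega)]; norm_num
        rw [hcast]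
      rw [hB, ← hsum]
    -- covering the complement
    have hcover : {ω : Edge n → Bool | ((Finset.univ.filter fun i : Fin n =>
          2 * (1 - 1 / n) * d < deg ω i).card : ℝ) ≤ 100 * n / d}ᶜ
        ⊆ ⋃ T ∈ Finset.powersetCard m (Finset.univ : Finset (Fin n)),
            {ω : Edge n → Bool | ∀ i ∈ T, 2 * (1 - 1/(n:ℝ)) * d < deg ω i} := by
      intro ω hω
      simp only [Set.mem_compl_iff, Set.mem_setOf_eq, not_le] at hω
      have hcard : a ≤ (Finset.univ.filter fun i : Fin n =>
          2 * (1 - 1 / (n:ℝ)) * d < deg ω i).card := by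
        rw [ha]
        have h1 : Nat.floor (100 * (n:ℝ)/d) < (Finset.univ.filter fun i : Fin n =>
            2 * (1 - 1 / (n:ℝ)) * d < deg ω i).card := by
          rw [Nat.floor_lt (by positivity)]
          exact hω
        omega
      obtain ⟨T, hTsub, hTcard⟩ := Finset.exists_subset_card_eq
        (le_trans (min_le_left _ _) hcard)
      refine Set.mem_iUnion₂.mpr ⟨T, Finset.mem_powersetCard_univ.mpr hTcard, ?_⟩
      intro i hi
      have h2 := hTsub hi
      simp only [Finset.mem_filter] at h2
      exact h2.2
    have hcompl : erMeasure n d ({ω : Edge n → Bool | ((Finset.univ.filter fun i : Fin n =>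
          2 * (1 - 1 / n) * d < deg ω i).card : ℝ) ≤ 100 * n / d}ᶜ)
        ≤ ENNReal.ofReal ((n:ℝ)^(-C)) := by
      refine le_trans (measure_mono hcover) ?_
      refine le_trans (measure_biUnion_finset_le _ _) ?_
      have hstep : ∑ T ∈ Finset.powersetCard m (Finset.univ : Finset (Fin n)),
          erMeasure n d {ω : Edge n → Bool | ∀ i ∈ T, 2 * (1 - 1/(n:ℝ)) * d < deg ω i}
          ≤ ∑ _T ∈ Finset.powersetCard m (Finset.univ : Finset (Fin n)),
            ENNReal.ofReal B := Finset.sum_le_sum perT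
      refine le_trans hstep ?_
      rw [Finset.sum_const, Finset.card_powersetCard, Finset.card_univ, Fintype.card_fin,
        nsmul_eq_mul, ← ENNReal.ofReal_natCast (n.choose m),
        ← ENNReal.ofReal_mul (Nat.cast_nonneg _)]
      apply ENNReal.ofReal_le_ofReal
      have hch : ((n.choose m : ℕ) : ℝ) ≤ 2^n := by
        exact_mod_cast choose_le_two_pow' n m
      have htle : θ ≤ (t:ℝ) := Nat.le_ceil θ
      rw [hθdef] at htle
      have hnum := numeric_bound C hC n hn30 hnC d hd100 hdn m t hm1 hm2 htle
      calc ((n.choose m : ℕ) : ℝ) * B ≤ 2^n * B := mul_le_mul_of_nonneg_right hch hB0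
        _ ≤ (n:ℝ)^(-C) := by rw [hB, hp]; exact hnum
    -- finish
    have hmeas : MeasurableSet ({ω : Edge n → Bool | ((Finset.univ.filter fun i : Fin n =>
        2 * (1 - 1 / n) * d < deg ω i).card : ℝ) ≤ 100 * n / d}ᶜ) :=
      (Set.toFinite _).measurableSet
    have h1 : erMeasure n d {ω : Edge n → Bool | ((Finset.univ.filter fun i : Fin n =>
        2 * (1 - 1 / n) * d < deg ω i).card : ℝ) ≤ 100 * n / d}
        = 1 - erMeasure n d ({ω : Edge n → Bool | ((Finset.univ.filter fun i : Fin n =>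
        2 * (1 - 1 / n) * d < deg ω i).card : ℝ) ≤ 100 * n / d}ᶜ) := by
      have h2 := prob_compl_eq_one_sub (μ := erMeasure n d) hmeas
      rw [compl_compl] at h2
      exact h2
    rw [ge_iff_le, h1]
    have h3 : ENNReal.ofReal (1 - (n:ℝ)^(-C)) = 1 - ENNReal.ofReal ((n:ℝ)^(-C)) := by
      rw [ENNReal.ofReal_sub _ hrpow0, ENNReal.ofReal_one]
    rw [h3]
    exact tsub_le_tsub_left hcompl 1

end ER
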